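/- Let M be an n×n complex matrix such that M − M* = Φ·Δ + i·N, where Φ = diag(i·t₁, …, i·t_n) with real t_j ≥ 0, Δ = diag(δ₁, …, δ_n) with real δ_j ≥ C for some constant C > 0, and N is a positive semidefinite Hermitian matrix. Then for every x ∈ ℂⁿ, |⟨M x, x⟩| ≥ |Im ⟨M x, x⟩| ≥ (C/2)·∑_{j=1}^{n} t_j·|x_j|². -/

import Mathlib

open Matrix Complex
open scoped ComplexOrder

theorem imaginary_part_lower_bound {n : ℕ}
    (M N : Matrix (Fin n) (Fin n) ℂ)
    (t δ : Fin n → ℝ) (ht : ∀ j, 0 ≤ t j)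
    (C : ℝ) (hC : 0 < C) (hδ : ∀ j, C ≤ δ j)
    (hN : N.PosSemidef)
    (hM : M - Mᴴ = Matrix.diagonal (fun j => Complex.I * (t j : ℂ)) *
        Matrix.diagonal (fun j => (δ j : ℂ)) + Complex.I • N) :
    ∀ x : Fin n → ℂ,
      ‖star x ⬝ᵥ M.mulVec x‖ ≥ |(star x ⬝ᵥ M.mulVec x).im| ∧
      |(star x ⬝ᵥ M.mulVec x).im| ≥ (C / 2) * ∑ j, t j * ‖x j‖ ^ 2 := by
  intro x
  set z := star x ⬝ᵥ M.mulVec x with hz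
  refine ⟨Complex.abs_im_le_norm z, ?_⟩
  set w := star x ⬝ᵥ N.mulVec x with hw
  set S : ℝ := ∑ j, t j * δ j * ‖x j‖ ^ 2 with hS
  have hNx : 0 ≤ w := hN.dotProduct_mulVec_nonneg x
  have hwim : w.im = 0 := by
    have := (Complex.le_def.mp hNx).2
    simpa using this.symm
  have hwre : 0 ≤ w.re := by simpa using (Complex.le_def.mp hNx).1
  have hconj : star x ⬝ᵥ Mᴴ.mulVec x = star z := by
    rw [hz, Matrix.star_dotProduct, Matrix.star_mulVec, Matrix.conjTranspose_conjTranspose,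
      ← Matrix.dotProduct_mulVec]
  have key : z - star z = Complex.I * (S : ℂ) + Complex.I * w := by
    have h1 : star x ⬝ᵥ (M - Mᴴ).mulVec x = z - star z := by
      rw [Matrix.sub_mulVec, dotProduct_sub, hconj, hz]
    rw [hM] at h1
    rw [← h1, Matrix.diagonal_mul_diagonal, Matrix.add_mulVec, dotProduct_add,
      Matrix.smul_mulVec, dotProduct_smul, smul_eq_mul]
    congr 1
    simp only [dotProduct, Matrix.mulVec_diagonal, Pi.star_apply, hS]
    rw [Complex.ofReal_sum, Finset.mul_sum]
    refine Finset.sum_congr rfl fun j _ => ?_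
    push_cast
    rw [← Complex.ofReal_pow, Complex.sq_norm, Complex.normSq_eq_conj_mul_self,
      Complex.star_def]
    ring
  have him : 2 * z.im = S + w.re := by
    have := congrArg Complex.im key
    simp [Complex.sub_im, Complex.add_im, Complex.mul_im, hwim, two_mul] at this
    linarith [this]
  have hsum : C * ∑ j, t j * ‖x j‖ ^ 2 ≤ S := by
    rw [hS, Finset.mul_sum]
    refine Finset.sum_le_sum fun j _ => ?_
    nlinarith [mul_nonneg (mul_nonneg (ht j) (sub_nonneg.mpr (hδ j))) (sq_nonneg ‖x j‖)]
  have habs : z.im ≤ |z.im| := le_abs_self _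
  linarith
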